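/- For p ≥ 2, the Schatten p-norm is p-th power superadditive under row concatenation: if A is the vertical concatenation of X and Y, then ‖A‖_{S_p}^p ≥ ‖X‖_{S_p}^p + ‖Y‖_{S_p}^p. -/

import Mathlib

open Matrix

set_option linter.unusedSectionVars false
set_option linter.unusedVariables false
set_option maxHeartbeats 1000000

section MySchattenAux

open MeasureTheory Set

variable {n : Type*} [Fintype n] [DecidableEq n]

lemma myPsdDiag {M : Matrix n n ℝ} (hM : M.PosSemidef) (i : n) : 0 ≤ M i i := by
  exact hM.diag_nonneg

lemma myConjPsd {A : Matrix n n ℝ} (hA : A.PosSemidef) (B : Matrix n n ℝ) :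
    (B * A * star B).PosSemidef := by
  simpa [Matrix.star_eq_conjTranspose] using hA.mul_mul_conjTranspose_same B

lemma myConjDiag {A : Matrix n n ℝ} (hA : A.IsHermitian) :
    star (hA.eigenvectorUnitary : Matrix n n ℝ) * A * (hA.eigenvectorUnitary : Matrix n n ℝ)
      = diagonal hA.eigenvalues := by
  have := hA.conjStarAlgAut_star_eigenvectorUnitary
  simpa [Unitary.conjStarAlgAut_apply, Matrix.mul_assoc] using this

lemma mySpectral {A : Matrix n n ℝ} (hA : A.IsHermitian) :
    A = (hA.eigenvectorUnitary : Matrix n n ℝ) * diagonal hA.eigenvalues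
      * star (hA.eigenvectorUnitary : Matrix n n ℝ) := by
  have := hA.spectral_theorem
  simpa [Unitary.conjStarAlgAut_apply] using this

lemma myDiagSub (a b : n → ℝ) :
    diagonal a - diagonal b = diagonal (fun i => a i - b i) := by
  ext i j
  by_cases h : i = j <;> simp [h, Matrix.diagonal_apply_ne, Matrix.sub_apply]

lemma myUdiagU (U : Matrix n n ℝ) (hU : star U * U = 1) (a b : n → ℝ) :
    (U * diagonal a * star U) * (U * diagonal b * star U)
      = U * diagonal (fun i => a i * b i) * star U := by
  calc (U * diagonal a * star U) * (U * diagonal b * star U)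
      = U * diagonal a * (star U * U) * diagonal b * star U := by
        simp only [Matrix.mul_assoc]
    _ = U * diagonal (fun i => a i * b i) * star U := by
        rw [hU]; simp only [Matrix.mul_one, Matrix.mul_assoc, Matrix.diagonal_mul_diagonal]

lemma mySqrtAux {S : Matrix n n ℝ} (hS : S.PosSemidef) :
    ∃ C : Matrix n n ℝ, star C = C ∧ C * C = S := by
  set U := (hS.1.eigenvectorUnitary : Matrix n n ℝ) with hU
  refine ⟨U * diagonal (fun i => Real.sqrt (hS.1.eigenvalues i)) * star U, ?_, ?_⟩
  · simp [Matrix.star_mul, Matrix.mul_assoc, Matrix.star_eq_conjTranspose,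
      Matrix.diagonal_conjTranspose]
  · rw [myUdiagU U (Unitary.coe_star_mul_self _)]
    conv_rhs => rw [mySpectral hS.1]
    rw [show (fun i => Real.sqrt (hS.1.eigenvalues i) * Real.sqrt (hS.1.eigenvalues i))
      = hS.1.eigenvalues from funext fun i => Real.mul_self_sqrt (hS.eigenvalues_nonneg i)]

/-- Antitonicity of matrix inverse wrt the Loewner order, with explicit inverses. -/
lemma myInvAntitone {S T Si Ti : Matrix n n ℝ} (hS : S.PosSemidef) (hT : T.PosSemidef)
    (hTS : (T - S).PosSemidef) (hSi : S * Si = 1) (hTi : T * Ti = 1) :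
    (Si - Ti).PosSemidef := by
  classical
  obtain ⟨C, hCH, hCC⟩ := mySqrtAux hS
  have hdetS : IsUnit S.det := by
    refine IsUnit.of_mul_eq_one Si.det ?_
    rw [← Matrix.det_mul, hSi, Matrix.det_one]
  have hdetC : IsUnit C.det := by
    have h : C.det * C.det = S.det := by rw [← Matrix.det_mul, hCC]
    exact isUnit_of_mul_isUnit_left (h ▸ hdetS)
  set Ci := C⁻¹ with hCidef
  have hCCi : C * Ci = 1 := Matrix.mul_nonsing_inv _ hdetC
  have hCiC : Ci * C = 1 := Matrix.nonsing_inv_mul _ hdetC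
  have hCiH : star Ci = Ci := by
    rw [hCidef, Matrix.star_eq_conjTranspose, Matrix.conjTranspose_nonsing_inv,
      ← Matrix.star_eq_conjTranspose, hCH]
  have hCiSCi : Ci * S * Ci = 1 := by
    rw [← hCC]
    calc Ci * (C * C) * Ci = (Ci * C) * (C * Ci) := by simp only [Matrix.mul_assoc]
      _ = 1 := by rw [hCiC, hCCi, Matrix.one_mul]
  set M := Ci * T * Ci with hMdef
  have hMH : M.IsHermitian := by
    have hCiH' : Ciᴴ = Ci := by rw [← Matrix.star_eq_conjTranspose]; exact hCiH
    show (Ci * T * Ci)ᴴ = Ci * T * Ci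
    rw [Matrix.conjTranspose_mul, Matrix.conjTranspose_mul, hCiH', hT.1]
    simp only [Matrix.mul_assoc]
  have hM1 : (M - 1).PosSemidef := by
    have h1 : Ci * (T - S) * star Ci = M - 1 := by
      rw [hCiH, Matrix.mul_sub, Matrix.sub_mul, hCiSCi]
    rw [← h1]; exact myConjPsd hTS Ci
  set W := (hMH.eigenvectorUnitary : Matrix n n ℝ) with hWdef
  have hWl : star W * W = 1 := Unitary.coe_star_mul_self _
  have hWr : W * star W = 1 := Unitary.coe_mul_star_self _
  set d := hMH.eigenvalues with hddef
  have hd1 : ∀ i, 1 ≤ d i := by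
    intro i
    have hps : (star W * (M - 1) * W).PosSemidef := by
      have := myConjPsd hM1 (star W)
      simpa [star_star] using this
    have hdiag : star W * (M - 1) * W = diagonal d - 1 := by
      rw [Matrix.mul_sub, Matrix.sub_mul, myConjDiag hMH, Matrix.mul_one, hWl]
    have := myPsdDiag hps i
    rw [hdiag] at this
    simpa [Matrix.sub_apply, Matrix.diagonal_apply_eq, Matrix.one_apply_eq] using this
  have hdne : ∀ i, d i ≠ 0 := fun i => by have := hd1 i; positivity
  set N := W * diagonal (fun i => (d i)⁻¹) * star W with hNdef
  have hMN : M * N = 1 := by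
    have hM' : M = W * diagonal d * star W := mySpectral hMH
    rw [hM', hNdef, myUdiagU W hWl]
    have h : (fun i => d i * (d i)⁻¹) = fun _ => (1:ℝ) := by
      funext i; exact mul_inv_cancel₀ (hdne i)
    rw [h]
    simpa using hWr
  have h1N : (1 - N).PosSemidef := by
    have h1 : 1 - N = W * diagonal (fun i => 1 - (d i)⁻¹) * star W := by
      have hone : (1 : Matrix n n ℝ) = W * Matrix.diagonal (fun _ => (1:ℝ)) * star W := by
        simpa using hWr.symm
      rw [hNdef]
      nth_rewrite 1 [hone]
      rw [← Matrix.sub_mul, ← Matrix.mul_sub, myDiagSub]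
    rw [h1]
    refine myConjPsd (Matrix.PosSemidef.diagonal ?_) W
    rw [Pi.le_def]
    intro i
    simp only [Pi.zero_apply]
    have h1' := hd1 i
    have h0 : 0 < d i := lt_of_lt_of_le one_pos h1'
    have h2 : (d i)⁻¹ ≤ 1 := by
      rw [inv_le_one_iff₀]; right; exact h1'
    linarith
  have hSiS : Si * S = 1 := mul_eq_one_comm.mp hSi
  have hSi' : Si = Ci * Ci := by
    have h2 : S * (Ci * Ci) = 1 := by
      rw [← hCC]
      calc C * C * (Ci * Ci) = C * (C * Ci) * Ci := by simp only [Matrix.mul_assoc]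
        _ = 1 := by rw [hCCi, Matrix.mul_one, hCCi]
    calc Si = Si * (S * (Ci * Ci)) := by rw [h2, Matrix.mul_one]
      _ = (Si * S) * (Ci * Ci) := (Matrix.mul_assoc _ _ _).symm
      _ = Ci * Ci := by rw [hSiS, Matrix.one_mul]
  have hNM : N * M = 1 := mul_eq_one_comm.mp hMN
  have hN' : N = C * Ti * C := by
    have h2 : M * (C * Ti * C) = 1 := by
      rw [hMdef]
      calc Ci * T * Ci * (C * Ti * C)
          = Ci * T * ((Ci * C) * (Ti * C)) := by simp only [Matrix.mul_assoc]
        _ = Ci * (T * Ti) * C := by rw [hCiC, Matrix.one_mul]; simp only [Matrix.mul_assoc]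
        _ = 1 := by rw [hTi, Matrix.mul_one, hCiC]
    calc N = N * (M * (C * Ti * C)) := by rw [h2, Matrix.mul_one]
      _ = (N * M) * (C * Ti * C) := (Matrix.mul_assoc _ _ _).symm
      _ = C * Ti * C := by rw [hNM, Matrix.one_mul]
  have hCiNCi : Ci * N * Ci = Ti := by
    rw [hN']
    calc Ci * (C * Ti * C) * Ci
        = (Ci * C) * (Ti * (C * Ci)) := by simp only [Matrix.mul_assoc]
      _ = Ti := by rw [hCiC, hCCi, Matrix.one_mul, Matrix.mul_one]
  have hfinal : Si - Ti = Ci * (1 - N) * star Ci := by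
    rw [hCiH, Matrix.mul_sub, Matrix.sub_mul, Matrix.mul_one, hSi', hCiNCi]
  rw [hfinal]
  exact myConjPsd h1N Ci

lemma myTracePsdNonneg {M : Matrix n n ℝ} (hM : M.PosSemidef) : 0 ≤ M.trace := by
  rw [Matrix.trace]
  exact Finset.sum_nonneg fun i _ => myPsdDiag hM i

lemma myTraceMulPsd {P M : Matrix n n ℝ} (hP : P.PosSemidef) (hM : M.PosSemidef) :
    0 ≤ (P * M).trace := by
  obtain ⟨C, hCH, hCC⟩ := mySqrtAux hP
  have h : (P * M).trace = (C * M * star C).trace := by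
    rw [hCH, ← hCC, Matrix.mul_assoc, Matrix.trace_mul_comm, Matrix.mul_assoc,
      Matrix.trace_mul_comm, Matrix.mul_assoc]
  rw [h]
  exact myTracePsdNonneg (myConjPsd hM C)

lemma myTraceU (U : Matrix n n ℝ) (hU : star U * U = 1) (d : n → ℝ) :
    (U * diagonal d * star U).trace = ∑ i, d i := by
  rw [Matrix.trace_mul_cycle, hU, Matrix.one_mul, Matrix.trace_diagonal]

lemma myTracePUD (P U : Matrix n n ℝ) (d : n → ℝ) :
    (P * (U * diagonal d * star U)).trace = ∑ i, (star U * P * U) i i * d i := by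
  rw [show P * (U * diagonal d * star U) = (P * U * diagonal d) * star U by
    simp only [Matrix.mul_assoc], Matrix.trace_mul_comm,
    show star U * (P * U * diagonal d) = (star U * P * U) * diagonal d by
    simp only [Matrix.mul_assoc]]
  simp [Matrix.trace, Matrix.diag, Matrix.mul_diagonal]

lemma mySmulOne (t : ℝ) : (t • (1 : Matrix n n ℝ)) = Matrix.diagonal (fun _ => t) := by
  ext i j
  by_cases h : i = j <;> simp [h, Matrix.one_apply, Matrix.diagonal_apply]

lemma myAddSmul {A : Matrix n n ℝ} (hA : A.IsHermitian) (t : ℝ) :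
    A + t • 1 = (hA.eigenvectorUnitary : Matrix n n ℝ)
      * diagonal (fun i => hA.eigenvalues i + t)
      * star (hA.eigenvectorUnitary : Matrix n n ℝ) := by
  set U := (hA.eigenvectorUnitary : Matrix n n ℝ) with hUdef
  have hUr : U * star U = 1 := Unitary.coe_mul_star_self _
  have h1 : t • (1 : Matrix n n ℝ) = U * Matrix.diagonal (fun _ => t) * star U := by
    rw [← mySmulOne t]
    rw [show U * (t • (1:Matrix n n ℝ)) * star U = t • (U * 1 * star U) by
      simp [Matrix.mul_smul, Matrix.smul_mul], Matrix.mul_one, hUr]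
  nth_rewrite 1 [mySpectral hA, h1]
  rw [← Matrix.add_mul, ← Matrix.mul_add, Matrix.diagonal_add]

/-- Entries of `star U * P * U` in terms of the spectral data of `P`. -/
lemma myKentry {P : Matrix n n ℝ} (hP : P.PosSemidef) (U : Matrix n n ℝ) (i : n) :
    (star U * P * U) i i
      = ∑ j, hP.1.eigenvalues j * ((star U * (hP.1.eigenvectorUnitary : Matrix n n ℝ)) i j)^2 := by
  set V := (hP.1.eigenvectorUnitary : Matrix n n ℝ) with hVdef
  set W := star U * V with hWdef
  have hKW : star U * P * U = W * diagonal hP.1.eigenvalues * star W := by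
    rw [hWdef, Matrix.star_mul, star_star]
    nth_rewrite 1 [mySpectral hP.1]
    simp only [Matrix.mul_assoc]
    rfl
  rw [hKW]
  rw [show (W * diagonal hP.1.eigenvalues * star W) i i
      = ∑ j, (W * diagonal hP.1.eigenvalues) i j * (star W) j i from Matrix.mul_apply]
  refine Finset.sum_congr rfl fun j _ => ?_
  rw [Matrix.mul_diagonal, Matrix.star_apply, star_trivial]
  ring

/-- Column sums of squared entries of a real unitary-derived matrix. -/
lemma myColSum {U V : Matrix n n ℝ} (hU : U * star U = 1) (hV : star V * V = 1) (j : n) :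
    ∑ i, ((star U * V) i j)^2 = 1 := by
  set W := star U * V with hWdef
  have hWl : star W * W = 1 := by
    rw [hWdef, Matrix.star_mul, star_star]
    calc star V * U * (star U * V) = star V * (U * star U) * V := by simp only [Matrix.mul_assoc]
      _ = 1 := by rw [hU, Matrix.mul_one, hV]
  have h := congrFun (congrFun hWl j) j
  rw [show (star W * W) j j = ∑ i, (star W) j i * W i j from Matrix.mul_apply] at h
  rw [Matrix.one_apply_eq] at h
  rw [← h]
  refine Finset.sum_congr rfl fun i _ => ?_
  rw [Matrix.star_apply, star_trivial]
  ring

/-- `∑_i λ_i W_{ij}^2 = (V* H V)_{jj} ≥ μ_j`. -/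
lemma myRowAvg {P H : Matrix n n ℝ} (hP : P.PosSemidef) (hH : H.PosSemidef)
    (hHP : (H - P).PosSemidef) (j : n) :
    hP.1.eigenvalues j ≤ ∑ i, hH.1.eigenvalues i *
      ((star (hH.1.eigenvectorUnitary : Matrix n n ℝ)
        * (hP.1.eigenvectorUnitary : Matrix n n ℝ)) i j)^2 := by
  set U := (hH.1.eigenvectorUnitary : Matrix n n ℝ) with hUdef
  set V := (hP.1.eigenvectorUnitary : Matrix n n ℝ) with hVdef
  set W := star U * V with hWdef
  have hsum : ∑ i, hH.1.eigenvalues i * (W i j)^2 = (star V * H * V) j j := by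
    have hVHV : star V * H * V = star W * diagonal hH.1.eigenvalues * W := by
      rw [hWdef, Matrix.star_mul, star_star]
      nth_rewrite 1 [mySpectral hH.1]
      simp only [Matrix.mul_assoc]
      rfl
    rw [hVHV]
    rw [show (star W * diagonal hH.1.eigenvalues * W) j j
        = ∑ i, (star W * diagonal hH.1.eigenvalues) j i * W i j from Matrix.mul_apply]
    refine Finset.sum_congr rfl fun i _ => ?_
    rw [Matrix.mul_diagonal, Matrix.star_apply, star_trivial]
    ring
  rw [hsum]
  have hdiff : (star V * H * V) j j - hP.1.eigenvalues j
      = (star V * (H - P) * V) j j := by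
    rw [Matrix.mul_sub, Matrix.sub_mul, Matrix.sub_apply, myConjDiag hP.1,
      Matrix.diagonal_apply_eq]
  have h0 : 0 ≤ (star V * (H - P) * V) j j := by
    have := myPsdDiag (by simpa [star_star] using myConjPsd hHP (star V)) j
    exact this
  linarith [hdiff ▸ h0]

/-- Resolvent trace comparison: for `0 ≤ P ≤ H` and `t > 0`,
`tr(P (H+t)⁻¹) ≤ tr(P (P+t)⁻¹)`. -/
lemma myStarIneq {P H : Matrix n n ℝ} (hP : P.PosSemidef) (hH : H.PosSemidef)
    (hHP : (H - P).PosSemidef) {t : ℝ} (ht : 0 < t) :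
    ∑ i, (star (hH.1.eigenvectorUnitary : Matrix n n ℝ) * P
        * (hH.1.eigenvectorUnitary : Matrix n n ℝ)) i i * (hH.1.eigenvalues i + t)⁻¹
      ≤ ∑ j, hP.1.eigenvalues j * (hP.1.eigenvalues j + t)⁻¹ := by
  set U := (hH.1.eigenvectorUnitary : Matrix n n ℝ) with hUdef
  set V := (hP.1.eigenvectorUnitary : Matrix n n ℝ) with hVdef
  set lam := hH.1.eigenvalues with hlamdef
  set mu := hP.1.eigenvalues with hmudef
  have hUl : star U * U = 1 := Unitary.coe_star_mul_self _
  have hVl : star V * V = 1 := Unitary.coe_star_mul_self _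
  have hmu0 : ∀ j, 0 ≤ mu j := fun j => hP.eigenvalues_nonneg j
  have hlam0 : ∀ i, 0 ≤ lam i := fun i => hH.eigenvalues_nonneg i
  set St := V * diagonal (fun j => (mu j + t)⁻¹) * star V with hStdef
  set Rt := U * diagonal (fun i => (lam i + t)⁻¹) * star U with hRtdef
  -- inverses
  have hPt : (P + t • 1) * St = 1 := by
    rw [myAddSmul hP.1 t, hStdef, ← hVdef, myUdiagU V hVl]
    rw [show (fun j => (mu j + t) * (mu j + t)⁻¹) = fun _ => (1:ℝ) by
      funext j; exact mul_inv_cancel₀ (by have := hmu0 j; positivity)]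
    rw [Matrix.diagonal_one, Matrix.mul_one]
    exact Unitary.coe_mul_star_self _
  have hHt : (H + t • 1) * Rt = 1 := by
    rw [myAddSmul hH.1 t, hRtdef, ← hUdef, myUdiagU U hUl]
    rw [show (fun i => (lam i + t) * (lam i + t)⁻¹) = fun _ => (1:ℝ) by
      funext i; exact mul_inv_cancel₀ (by have := hlam0 i; positivity)]
    rw [Matrix.diagonal_one, Matrix.mul_one]
    exact Unitary.coe_mul_star_self _
  have hsmul : (t • (1 : Matrix n n ℝ)).PosSemidef := by
    have : (t • (1 : Matrix n n ℝ)) = Matrix.diagonal (fun _ => t) := by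
      ext i j; by_cases h : i = j <;> simp [h, Matrix.one_apply, Matrix.diagonal_apply]
    rw [this]
    exact Matrix.PosSemidef.diagonal (fun i => ht.le)
  have hPts : (P + t • 1).PosSemidef := hP.add hsmul
  have hHts : (H + t • 1).PosSemidef := hH.add hsmul
  have hdiffps : ((H + t • 1) - (P + t • 1)).PosSemidef := by
    simpa using hHP
  have hAnt : (St - Rt).PosSemidef := myInvAntitone hPts hHts hdiffps hPt hHt
  have htr : 0 ≤ (P * (St - Rt)).trace := myTraceMulPsd hP hAnt
  rw [Matrix.mul_sub, Matrix.trace_sub] at htr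
  have h1 : (P * St).trace = ∑ j, mu j * (mu j + t)⁻¹ := by
    have hPSt : P * St = V * diagonal (fun j => mu j * (mu j + t)⁻¹) * star V := by
      nth_rewrite 1 [mySpectral hP.1]
      rw [← hVdef, ← hmudef, hStdef, myUdiagU V hVl]
    rw [hPSt, myTraceU V hVl]
  have h2 : (P * Rt).trace = ∑ i, (star U * P * U) i i * (lam i + t)⁻¹ :=
    myTracePUD P U _
  rw [h1, h2] at htr
  linarith

lemma myIntegrable {s : ℝ} (hs0 : 0 < s) (hs1 : s < 1) {x : ℝ} (hx : 0 ≤ x) :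
    IntegrableOn (fun t : ℝ => t^(s-1) * (x * (x+t)⁻¹)) (Set.Ioi 0) := by
  rcases eq_or_lt_of_le hx with h0 | hxpos
  · have h : (fun t:ℝ => t^(s-1) * (x * (x+t)⁻¹)) = fun _ => 0 := by
      funext t; rw [← h0]; ring
    rw [h]; exact integrableOn_zero
  have hcont : ContinuousOn (fun t:ℝ => t^(s-1) * (x * (x+t)⁻¹)) (Set.Ioi 0) := by
    intro t ht
    have ht0 : (0:ℝ) < t := ht
    apply ContinuousWithinAt.mul
    · exact (Real.continuousAt_rpow_const t (s-1) (Or.inl ht0.ne')).continuousWithinAt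
    · apply ContinuousWithinAt.mul continuousWithinAt_const
      exact ((continuous_const.add continuous_id).continuousAt.inv₀
        (by show x + t ≠ 0; positivity)).continuousWithinAt
  rw [← Set.Ioc_union_Ioi_eq_Ioi (zero_le_one : (0:ℝ) ≤ 1)]
  apply IntegrableOn.union
  · -- on Ioc 0 1, dominate by t ^ (s-1)
    have hrint : IntegrableOn (fun t : ℝ => t^(s-1)) (Set.Ioc 0 1) := by
      have := intervalIntegral.intervalIntegrable_rpow' (a := 0) (b := 1)
        (show (-1:ℝ) < s - 1 by linarith)
      rwa [intervalIntegrable_iff_integrableOn_Ioc_of_le zero_le_one] at this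
    refine hrint.mono' ?_ ?_
    · exact ((hcont.mono (Set.Ioc_subset_Ioi_self)).aestronglyMeasurable measurableSet_Ioc)
    · filter_upwards [ae_restrict_mem measurableSet_Ioc] with t ht
      have ht0 : 0 < t := ht.1
      have h1 : x * (x+t)⁻¹ ≤ 1 := by
        rw [← div_eq_mul_inv, div_le_one (by positivity)]; linarith
      have h2 : 0 ≤ x * (x+t)⁻¹ := by positivity
      rw [Real.norm_eq_abs, abs_of_nonneg (by positivity)]
      nth_rewrite 2 [show t^(s-1) = t^(s-1) * 1 by ring]
      exact mul_le_mul_of_nonneg_left h1 (by positivity)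
  · -- on Ioi 1, dominate by x * t ^ (s-2)
    have hrint : IntegrableOn (fun t : ℝ => x * t^(s-2)) (Set.Ioi 1) :=
      (integrableOn_Ioi_rpow_of_lt (show s-2 < -1 by linarith) one_pos).const_mul x
    refine hrint.mono' ?_ ?_
    · exact ((hcont.mono (fun t (ht : 1 < t) => lt_trans one_pos ht)).aestronglyMeasurable
        measurableSet_Ioi)
    · filter_upwards [ae_restrict_mem measurableSet_Ioi] with t ht
      have ht1 : (1:ℝ) < t := ht
      have ht0 : (0:ℝ) < t := lt_trans one_pos ht1
      rw [Real.norm_eq_abs, abs_of_nonneg (by positivity)]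
      have h1 : (x+t)⁻¹ ≤ t⁻¹ := by
        exact inv_anti₀ ht0 (by linarith)
      have h2 : t^(s-1) * (x * (x+t)⁻¹) ≤ t^(s-1) * (x * t⁻¹) := by
        refine mul_le_mul_of_nonneg_left ?_ (by positivity)
        exact mul_le_mul_of_nonneg_left h1 hx
      refine h2.trans (le_of_eq ?_)
      rw [show s - 2 = (s-1) + (-1) by ring, Real.rpow_add ht0, Real.rpow_neg_one]
      ring

lemma mySubst {s : ℝ} (hs0 : 0 < s) {x : ℝ} (hx : 0 < x) :
    ∫ t in Set.Ioi (0:ℝ), t^(s-1) * (x * (x+t)⁻¹)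
      = x^s * ∫ t in Set.Ioi (0:ℝ), t^(s-1) * (1 * (1+t)⁻¹) := by
  have h := integral_comp_mul_left_Ioi (fun t : ℝ => t^(s-1) * (x * (x+t)⁻¹)) 0 hx
  rw [mul_zero] at h
  have hcongr : ∫ u in Set.Ioi (0:ℝ), (x*u)^(s-1) * (x * (x+x*u)⁻¹)
      = ∫ u in Set.Ioi (0:ℝ), x^(s-1) * (u^(s-1) * (1 * (1+u)⁻¹)) := by
    refine setIntegral_congr_fun measurableSet_Ioi (fun u hu => ?_)
    have hu0 : (0:ℝ) < u := hu
    rw [Real.mul_rpow hx.le hu0.le]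
    have hxu : x + x*u = x * (1+u) := by ring
    rw [hxu, mul_inv]
    have h1u : (0:ℝ) < 1 + u := by linarith
    field_simp
  rw [hcongr, MeasureTheory.integral_const_mul] at h
  have hxs : x * x^(s-1) = x^s := by
    rw [Real.rpow_sub hx, Real.rpow_one, div_eq_mul_inv]
    field_simp
  rw [smul_eq_mul] at h
  have h2 := congrArg (fun z => x * z) h
  rw [← mul_assoc, ← mul_assoc, mul_inv_cancel₀ hx.ne', one_mul, hxs] at h2
  exact h2.symm

lemma myI1pos {s : ℝ} (hs0 : 0 < s) (hs1 : s < 1) :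
    0 < ∫ t in Set.Ioi (0:ℝ), t^(s-1) * (1 * (1+t)⁻¹) := by
  have hint : IntegrableOn (fun t : ℝ => t^(s-1) * (1 * (1+t)⁻¹)) (Set.Ioi 0) :=
    myIntegrable hs0 hs1 zero_le_one
  have hnn : ∀ t ∈ Set.Ioi (0:ℝ), 0 ≤ t^(s-1) * (1 * (1+t)⁻¹) := by
    intro t ht
    have ht0 : (0:ℝ) < t := ht
    positivity
  set C : ℝ := 2^(s-1) * (1/3) with hCdef
  have hCpos : 0 < C := by
    have := Real.rpow_pos_of_pos (show (0:ℝ) < 2 by norm_num) (s-1)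
    positivity
  have hlow : ∫ t in Set.Ioc (1:ℝ) 2, C ≤ ∫ t in Set.Ioc (1:ℝ) 2, t^(s-1) * (1 * (1+t)⁻¹) := by
    refine setIntegral_mono_on (integrableOn_const measure_Ioc_lt_top.ne) 
      (hint.mono (fun t ht => lt_trans one_pos ht.1) le_rfl) measurableSet_Ioc ?_
    intro t ht
    have ht1 : (1:ℝ) < t := ht.1
    have ht2 : t ≤ 2 := ht.2
    have ht0 : (0:ℝ) < t := lt_trans one_pos ht1
    have h1 : (2:ℝ)^(s-1) ≤ t^(s-1) :=
      Real.rpow_le_rpow_of_nonpos ht0 ht2 (by linarith)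
    have h2 : (1/3 : ℝ) ≤ 1 * (1+t)⁻¹ := by
      rw [one_mul]
      rw [show (1/3:ℝ) = 3⁻¹ by norm_num]
      exact inv_anti₀ (by linarith) (by linarith)
    calc C = 2^(s-1) * (1/3) := rfl
      _ ≤ t^(s-1) * (1 * (1+t)⁻¹) := by
          apply mul_le_mul h1 h2 (by norm_num) (by positivity)
  have hconstval : ∫ t in Set.Ioc (1:ℝ) 2, C = C := by
    rw [setIntegral_const]
    rw [Real.volume_real_Ioc]
    norm_num
  have hmono : ∫ t in Set.Ioc (1:ℝ) 2, t^(s-1) * (1 * (1+t)⁻¹)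
      ≤ ∫ t in Set.Ioi (0:ℝ), t^(s-1) * (1 * (1+t)⁻¹) := by
    refine setIntegral_mono_set hint ?_ ?_
    · filter_upwards [ae_restrict_mem measurableSet_Ioi] with t ht
      exact hnn t ht
    · refine HasSubset.Subset.eventuallyLE ?_
      intro t ht
      exact lt_trans one_pos ht.1
  linarith [hconstval ▸ hlow]

lemma myScalarB {n : Type*} [Fintype n] {s : ℝ} (hs0 : 0 < s) (hs1 : s < 1)
    (c lam mu : n → ℝ)
    (hc : ∀ i, 0 ≤ c i) (hlam : ∀ i, 0 ≤ lam i) (hmu : ∀ j, 0 ≤ mu j)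
    (hsum : ∑ i, c i = ∑ j, mu j)
    (ht : ∀ t : ℝ, 0 < t → ∑ i, c i * (lam i + t)⁻¹ ≤ ∑ j, mu j * (mu j + t)⁻¹) :
    ∑ j, mu j ^ (1 + s) ≤ ∑ i, lam i ^ s * c i := by
  classical
  set I1 : ℝ := ∫ t in Set.Ioi (0:ℝ), t^(s-1) * (1 * (1+t)⁻¹) with hI1def
  have hI1pos : 0 < I1 := myI1pos hs0 hs1
  have hIx : ∀ x : ℝ, 0 ≤ x →
      ∫ t in Set.Ioi (0:ℝ), t^(s-1) * (x * (x+t)⁻¹) = x^s * I1 := by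
    intro x hx
    rcases eq_or_lt_of_le hx with h0 | hxpos
    · rw [← h0]
      rw [show (fun t:ℝ => t^(s-1) * ((0:ℝ) * ((0:ℝ)+t)⁻¹)) = fun _ => (0:ℝ) by
        funext t; ring]
      rw [Real.zero_rpow hs0.ne', zero_mul]
      exact integral_zero _ _
    · exact mySubst hs0 hxpos
  -- integrands
  have hint1 : ∀ i : n, IntegrableOn
      (fun t : ℝ => c i * (t^(s-1) * (lam i * (lam i + t)⁻¹))) (Set.Ioi 0) :=
    fun i => (myIntegrable hs0 hs1 (hlam i)).const_mul (c i)
  have hint2 : ∀ j : n, IntegrableOn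
      (fun t : ℝ => mu j * (t^(s-1) * (mu j * (mu j + t)⁻¹))) (Set.Ioi 0) :=
    fun j => (myIntegrable hs0 hs1 (hmu j)).const_mul (mu j)
  have hG1 : IntegrableOn
      (fun t : ℝ => ∑ i, c i * (t^(s-1) * (lam i * (lam i + t)⁻¹))) (Set.Ioi 0) :=
    integrable_finset_sum _ (fun i _ => hint1 i)
  have hG2 : IntegrableOn
      (fun t : ℝ => ∑ j, mu j * (t^(s-1) * (mu j * (mu j + t)⁻¹))) (Set.Ioi 0) :=
    integrable_finset_sum _ (fun j _ => hint2 j)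
  -- pointwise comparison
  have hpt : ∀ t ∈ Set.Ioi (0:ℝ),
      ∑ j, mu j * (t^(s-1) * (mu j * (mu j + t)⁻¹))
        ≤ ∑ i, c i * (t^(s-1) * (lam i * (lam i + t)⁻¹)) := by
    intro t htpos
    have ht0 : (0:ℝ) < t := htpos
    have hkey : ∑ j, mu j * (mu j * (mu j + t)⁻¹) ≤ ∑ i, c i * (lam i * (lam i + t)⁻¹) := by
      have hid : ∀ x : ℝ, 0 ≤ x → x * (x+t)⁻¹ = 1 - t * (x+t)⁻¹ := by
        intro x hx
        have : x + t ≠ 0 := by positivity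
        field_simp
        ring
      have e1 : ∑ j, mu j * (mu j * (mu j + t)⁻¹)
          = ∑ j, mu j - t * ∑ j, mu j * (mu j + t)⁻¹ := by
        rw [Finset.mul_sum, ← Finset.sum_sub_distrib]
        refine Finset.sum_congr rfl fun j _ => ?_
        have hne : mu j + t ≠ 0 := by have := hmu j; positivity
        field_simp
        ring
      have e2 : ∑ i, c i * (lam i * (lam i + t)⁻¹)
          = ∑ i, c i - t * ∑ i, c i * (lam i + t)⁻¹ := by
        rw [Finset.mul_sum, ← Finset.sum_sub_distrib]
        refine Finset.sum_congr rfl fun i _ => ?_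
        have hne : lam i + t ≠ 0 := by have := hlam i; positivity
        field_simp
        ring
      rw [e1, e2, hsum]
      have := mul_le_mul_of_nonneg_left (ht t ht0) ht0.le
      linarith
    calc ∑ j, mu j * (t^(s-1) * (mu j * (mu j + t)⁻¹))
        = t^(s-1) * ∑ j, mu j * (mu j * (mu j + t)⁻¹) := by
          rw [Finset.mul_sum]; exact Finset.sum_congr rfl fun j _ => by ring
      _ ≤ t^(s-1) * ∑ i, c i * (lam i * (lam i + t)⁻¹) :=
          mul_le_mul_of_nonneg_left hkey (by positivity)
      _ = ∑ i, c i * (t^(s-1) * (lam i * (lam i + t)⁻¹)) := by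
          rw [Finset.mul_sum]; exact Finset.sum_congr rfl fun i _ => by ring
  have hineq : ∫ t in Set.Ioi (0:ℝ), ∑ j, mu j * (t^(s-1) * (mu j * (mu j + t)⁻¹))
      ≤ ∫ t in Set.Ioi (0:ℝ), ∑ i, c i * (t^(s-1) * (lam i * (lam i + t)⁻¹)) :=
    setIntegral_mono_on hG2 hG1 measurableSet_Ioi hpt
  have ev1 : ∫ t in Set.Ioi (0:ℝ), ∑ i, c i * (t^(s-1) * (lam i * (lam i + t)⁻¹))
      = ∑ i, c i * (lam i ^ s * I1) := by
    rw [integral_finset_sum _ (fun i _ => hint1 i)]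
    refine Finset.sum_congr rfl fun i _ => ?_
    rw [MeasureTheory.integral_const_mul, hIx (lam i) (hlam i)]
  have ev2 : ∫ t in Set.Ioi (0:ℝ), ∑ j, mu j * (t^(s-1) * (mu j * (mu j + t)⁻¹))
      = ∑ j, mu j * (mu j ^ s * I1) := by
    rw [integral_finset_sum _ (fun j _ => hint2 j)]
    refine Finset.sum_congr rfl fun j _ => ?_
    rw [MeasureTheory.integral_const_mul, hIx (mu j) (hmu j)]
  rw [ev1, ev2] at hineq
  have hfin : (∑ j, mu j ^ (1+s)) * I1 ≤ (∑ i, lam i ^ s * c i) * I1 := by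
    calc (∑ j, mu j ^ (1+s)) * I1 = ∑ j, mu j * (mu j ^ s * I1) := by
          rw [Finset.sum_mul]
          refine Finset.sum_congr rfl fun j _ => ?_
          rw [Real.rpow_add' (hmu j) (by positivity), Real.rpow_one]
          ring
      _ ≤ ∑ i, c i * (lam i ^ s * I1) := hineq
      _ = (∑ i, lam i ^ s * c i) * I1 := by
          rw [Finset.sum_mul]
          exact Finset.sum_congr rfl fun i _ => by ring
  exact le_of_mul_le_mul_right hfin hI1pos

lemma myPsdK {P : Matrix n n ℝ} (hP : P.PosSemidef) (U : Matrix n n ℝ) (i : n) :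
    0 ≤ (star U * P * U) i i := by
  rw [myKentry hP U i]
  exact Finset.sum_nonneg fun j _ =>
    mul_nonneg (hP.eigenvalues_nonneg j) (sq_nonneg _)

/-- The central trace inequality `tr(P H^s) ≥ tr(P^{1+s})` for `0 ≤ P ≤ H`, `s ≥ 0`. -/
lemma myCore {P H : Matrix n n ℝ} (hP : P.PosSemidef) (hH : H.PosSemidef)
    (hHP : (H - P).PosSemidef) {s : ℝ} (hs : 0 ≤ s) :
    ∑ j, hP.1.eigenvalues j ^ (1+s) ≤
      ∑ i, hH.1.eigenvalues i ^ s *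
        (star (hH.1.eigenvectorUnitary : Matrix n n ℝ) * P
          * (hH.1.eigenvectorUnitary : Matrix n n ℝ)) i i := by
  set U := (hH.1.eigenvectorUnitary : Matrix n n ℝ) with hUdef
  set V := (hP.1.eigenvectorUnitary : Matrix n n ℝ) with hVdef
  set lam := hH.1.eigenvalues with hlamdef
  set mu := hP.1.eigenvalues with hmudef
  have hUr : U * star U = 1 := Unitary.coe_mul_star_self _
  have hVl : star V * V = 1 := Unitary.coe_star_mul_self _
  have hmu0 : ∀ j, 0 ≤ mu j := fun j => hP.eigenvalues_nonneg j
  have hlam0 : ∀ i, 0 ≤ lam i := fun i => hH.eigenvalues_nonneg i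
  set W := star U * V with hWdef
  have hcol : ∀ j, ∑ i, (W i j)^2 = 1 := fun j => myColSum hUr hVl j
  have hK : ∀ i, (star U * P * U) i i = ∑ j, mu j * (W i j)^2 := fun i => myKentry hP U i
  have hswap : ∀ f : n → ℝ, ∑ i, f i * (star U * P * U) i i
      = ∑ j, mu j * (∑ i, (W i j)^2 * f i) := by
    intro f
    calc ∑ i, f i * (star U * P * U) i i = ∑ i, ∑ j, f i * (mu j * (W i j)^2) := by
          refine Finset.sum_congr rfl fun i _ => ?_
          rw [hK i, Finset.mul_sum]
      _ = ∑ j, ∑ i, f i * (mu j * (W i j)^2) := Finset.sum_comm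
      _ = ∑ j, mu j * (∑ i, (W i j)^2 * f i) := by
          refine Finset.sum_congr rfl fun j _ => ?_
          rw [Finset.mul_sum]
          exact Finset.sum_congr rfl fun i _ => by ring
  rcases eq_or_lt_of_le hs with hs0 | hspos
  · -- s = 0
    rw [← hs0]
    simp only [Real.rpow_zero, add_zero, Real.rpow_one, one_mul]
    have := hswap (fun _ => 1)
    simp only [one_mul, mul_one] at this
    rw [this]
    refine le_of_eq ?_
    refine (Finset.sum_congr rfl fun j _ => ?_).symm
    rw [hcol j, mul_one]
  rcases le_or_gt 1 s with hs1 | hs1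
  · -- Jensen case, s ≥ 1
    rw [hswap (fun i => lam i ^ s)]
    refine Finset.sum_le_sum fun j _ => ?_
    have hmus : mu j ^ (1+s) = mu j * mu j ^ s := by
      rw [Real.rpow_add' (hmu0 j) (by positivity), Real.rpow_one]
    rw [hmus]
    refine mul_le_mul_of_nonneg_left ?_ (hmu0 j)
    have h1 : mu j ^ s ≤ (∑ i, (W i j)^2 * lam i) ^ s := by
      refine Real.rpow_le_rpow (hmu0 j) ?_ hs
      have := myRowAvg hP hH hHP j
      rw [← hlamdef, ← hmudef, ← hUdef, ← hVdef, ← hWdef] at this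
      refine this.trans (le_of_eq ?_)
      exact Finset.sum_congr rfl fun i _ => by ring
    refine h1.trans ?_
    exact Real.rpow_arith_mean_le_arith_mean_rpow Finset.univ
      (fun i => (W i j)^2) lam (fun i _ => sq_nonneg _) (hcol j)
      (fun i _ => hlam0 i) hs1
  · -- integral case, 0 < s < 1
    refine myScalarB hspos hs1 (fun i => (star U * P * U) i i) lam mu
      (fun i => myPsdK hP U i) hlam0 hmu0 ?_ ?_
    · have := hswap (fun _ => 1)
      simp only [one_mul, mul_one] at this
      rw [this]
      exact Finset.sum_congr rfl fun j _ => by rw [hcol j, mul_one]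
    · intro t ht
      have := myStarIneq hP hH hHP ht
      rw [← hlamdef, ← hmudef, ← hUdef] at this
      exact this


lemma myKey {P Q : Matrix n n ℝ} (hP : P.PosSemidef) (hQ : Q.PosSemidef)
    (hPQ : (P + Q).PosSemidef) {r : ℝ} (hr : 1 ≤ r) :
    ∑ j, hP.1.eigenvalues j ^ r + ∑ j, hQ.1.eigenvalues j ^ r
      ≤ ∑ i, hPQ.1.eigenvalues i ^ r := by
  have hs : 0 ≤ r - 1 := by linarith
  have hr' : r = 1 + (r-1) := by ring
  set U := (hPQ.1.eigenvectorUnitary : Matrix n n ℝ) with hUdef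
  have h1 := myCore hP hPQ (by simpa using hQ) hs
  have h2 := myCore hQ hPQ (by simpa using hP) hs
  have hsplit : ∀ i, (star U * P * U) i i + (star U * Q * U) i i
      = hPQ.1.eigenvalues i := by
    intro i
    have hd : star U * P * U + star U * Q * U = diagonal hPQ.1.eigenvalues := by
      rw [← myConjDiag hPQ.1, Matrix.mul_add, Matrix.add_mul]
    have h := congrFun (congrFun hd i) i
    simpa [Matrix.add_apply, Matrix.diagonal_apply_eq] using h
  calc ∑ j, hP.1.eigenvalues j ^ r + ∑ j, hQ.1.eigenvalues j ^ r
      = ∑ j, hP.1.eigenvalues j ^ (1+(r-1)) + ∑ j, hQ.1.eigenvalues j ^ (1+(r-1)) := by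
        rw [← hr']
    _ ≤ (∑ i, hPQ.1.eigenvalues i ^ (r-1) * (star U * P * U) i i)
        + (∑ i, hPQ.1.eigenvalues i ^ (r-1) * (star U * Q * U) i i) := add_le_add h1 h2
    _ = ∑ i, hPQ.1.eigenvalues i ^ (r-1) * hPQ.1.eigenvalues i := by
        rw [← Finset.sum_add_distrib]
        refine Finset.sum_congr rfl fun i _ => ?_
        rw [← mul_add, hsplit i]
    _ = ∑ i, hPQ.1.eigenvalues i ^ r := by
        refine Finset.sum_congr rfl fun i _ => ?_
        rw [hr', Real.rpow_add' (hPQ.eigenvalues_nonneg i) (by rw [← hr']; positivity),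
          Real.rpow_one]
        ring

lemma myEigCongr {M₁ M₂ : Matrix n n ℝ} (h : M₁ = M₂) (h₁ : M₁.IsHermitian)
    (h₂ : M₂.IsHermitian) : h₁.eigenvalues = h₂.eigenvalues := by subst h; rfl

lemma myPsdT {N : Type*} [Fintype N] {m : ℕ} (M : Matrix N (Fin m) ℝ) :
    (Mᵀ * M).PosSemidef := by
  have := Matrix.posSemidef_conjTranspose_mul_self M
  simpa using this


end MySchattenAux

/-- The Schatten `p`-norm of a real matrix `M` with `m` columns:
`(∑ i, σᵢ(M) ^ p) ^ (1/p)`, where the singular values `σᵢ(M)` are the square roots of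
the eigenvalues of `MᴴM` (over `ℝ`, `Mᴴ = Mᵀ`). -/
noncomputable def schattenNorm {N : Type*} [Fintype N] {m : ℕ} (p : ℝ)
    (M : Matrix N (Fin m) ℝ) : ℝ :=
  (∑ i, Real.sqrt ((Matrix.isHermitian_conjTranspose_mul_self M).eigenvalues i) ^ p) ^ (1 / p)

lemma mySchattenPow {N : Type*} [Fintype N] {m : ℕ} {p : ℝ} (hp : 0 < p)
    (M : Matrix N (Fin m) ℝ) :
    schattenNorm p M ^ p
      = ∑ i, (Matrix.isHermitian_conjTranspose_mul_self M).eigenvalues i ^ (p/2) := by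
  unfold schattenNorm
  have hev : ∀ i, 0 ≤ (Matrix.isHermitian_conjTranspose_mul_self M).eigenvalues i := fun i =>
    (myPsdT M).eigenvalues_nonneg i
  have hterm : ∀ i ∈ Finset.univ,
      Real.sqrt ((Matrix.isHermitian_conjTranspose_mul_self M).eigenvalues i) ^ p
      = (Matrix.isHermitian_conjTranspose_mul_self M).eigenvalues i ^ (p/2) := by
    intro i _
    rw [Real.sqrt_eq_rpow, ← Real.rpow_mul (hev i), show (1:ℝ)/2 * p = p/2 by ring]
  rw [Finset.sum_congr rfl hterm]
  have hS : 0 ≤ ∑ i, (Matrix.isHermitian_conjTranspose_mul_self M).eigenvalues i ^ (p/2) :=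
    Finset.sum_nonneg fun i _ => Real.rpow_nonneg (hev i) _
  rw [← Real.rpow_mul hS, one_div, inv_mul_cancel₀ hp.ne', Real.rpow_one]

/-- For `p ≥ 2`, the Schatten p-norm is p-th power superadditive under row concatenation:
`‖[X; Y]‖_{S_p}^p ≥ ‖X‖_{S_p}^p + ‖Y‖_{S_p}^p`. -/
theorem schattenNorm_rpow_superadditive {n₁ n₂ m : ℕ}
    (X : Matrix (Fin n₁) (Fin m) ℝ) (Y : Matrix (Fin n₂) (Fin m) ℝ) (p : ℝ) (hp : 2 ≤ p) :
    schattenNorm p X ^ p + schattenNorm p Y ^ p ≤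
      schattenNorm p (Matrix.fromRows X Y) ^ p := by
  have hp0 : (0:ℝ) < p := by linarith
  rw [mySchattenPow hp0 X, mySchattenPow hp0 Y, mySchattenPow hp0 (Matrix.fromRows X Y)]
  have hAA : (Matrix.fromRows X Y)ᵀ * Matrix.fromRows X Y = Xᵀ * X + Yᵀ * Y := by
    rw [Matrix.transpose_fromRows, Matrix.fromCols_mul_fromRows]
  have hP := myPsdT X
  have hQ := myPsdT Y
  have hPQ : (Xᵀ * X + Yᵀ * Y).PosSemidef := hP.add hQ
  have hr : 1 ≤ p/2 := by linarith
  have hkey := myKey hP hQ hPQ hr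
  have hcast : (Matrix.isHermitian_conjTranspose_mul_self (Matrix.fromRows X Y)).eigenvalues
      = hPQ.1.eigenvalues := myEigCongr hAA _ _
  rw [hcast]
  exact hkey
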